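/- Solution of the tangent-method system in Regime I. Let α ∈ (0,1), define M(w) = w/((w−1)(αw+1−α)) and Φ(w) = αw/(αw+1−α), and set F(w;x,y) = x − M(w)·y − Φ(w). Let w_0 ∈ ℝ with w_0 ≠ 1 and w_0 ≠ 0, and define x_0 = αw_0^2/(αw_0^2+1−α), y_0 = α(1−α)(w_0−1)^2/(αw_0^2+1−α). Then F(w_0; x_0, y_0) = 0, and the derivative of the function w ↦ F(w; x_0, y_0) at w = w_0 equals 0. -/

import Mathlib

/-- Solution of the tangent-method system in Regime I: with
`M(w) = w/((w−1)(αw+1−α))`, `Φ(w) = αw/(αw+1−α)`,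
`F(w;x,y) = x − M(w)y − Φ(w)`, and the point
`x₀ = αw₀²/(αw₀²+1−α)`, `y₀ = α(1−α)(w₀−1)²/(αw₀²+1−α)`, one has
`F(w₀;x₀,y₀) = 0` and `(d/dw) F(w;x₀,y₀) |_{w=w₀} = 0`. -/
theorem tangent_method_system_regimeI
    (α : ℝ) (hα : α ∈ Set.Ioo (0 : ℝ) 1)
    (w₀ : ℝ) (hw₀1 : w₀ ≠ 1) (hw₀0 : w₀ ≠ 0) (hd : α * w₀ + 1 - α ≠ 0)
    (x₀ y₀ : ℝ)
    (hx : x₀ = α * w₀ ^ 2 / (α * w₀ ^ 2 + 1 - α))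
    (hy : y₀ = α * (1 - α) * (w₀ - 1) ^ 2 / (α * w₀ ^ 2 + 1 - α)) :
    x₀ - (w₀ / ((w₀ - 1) * (α * w₀ + 1 - α))) * y₀ - α * w₀ / (α * w₀ + 1 - α) = 0 ∧
    deriv (fun w : ℝ =>
      x₀ - (w / ((w - 1) * (α * w + 1 - α))) * y₀ - α * w / (α * w + 1 - α)) w₀ = 0 := by
  obtain ⟨hα0, hα1⟩ := hα
  have hD : α * w₀ ^ 2 + 1 - α ≠ 0 := by nlinarith [sq_nonneg w₀]
  have hw1 : w₀ - 1 ≠ 0 := sub_ne_zero.mpr hw₀1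
  have hg : (w₀ - 1) * (α * w₀ + 1 - α) ≠ 0 := mul_ne_zero hw1 hd
  have hlin : HasDerivAt (fun w : ℝ => α * w + 1 - α) α w₀ := by
    have h := ((hasDerivAt_id w₀).const_mul α).add_const (1 - α)
    have heq : (fun w : ℝ => α * w + (1 - α)) = fun w : ℝ => α * w + 1 - α := by
      funext w; ring
    simpa [heq] using h
  have hgd : HasDerivAt (fun w : ℝ => (w - 1) * (α * w + 1 - α))
      (1 * (α * w₀ + 1 - α) + (w₀ - 1) * α) w₀ :=
    ((hasDerivAt_id w₀).sub_const 1).mul hlin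
  have hM : HasDerivAt (fun w : ℝ => w / ((w - 1) * (α * w + 1 - α)))
      ((1 * ((w₀ - 1) * (α * w₀ + 1 - α)) -
        w₀ * (1 * (α * w₀ + 1 - α) + (w₀ - 1) * α)) /
        ((w₀ - 1) * (α * w₀ + 1 - α)) ^ 2) w₀ :=
    (hasDerivAt_id w₀).div hgd hg
  have hnum : HasDerivAt (fun w : ℝ => α * w) α w₀ := by
    simpa using (hasDerivAt_id w₀).const_mul α
  have hΦ : HasDerivAt (fun w : ℝ => α * w / (α * w + 1 - α))
      ((α * (α * w₀ + 1 - α) - α * w₀ * α) / (α * w₀ + 1 - α) ^ 2) w₀ :=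
    hnum.div hlin hd
  have hF : HasDerivAt (fun w : ℝ =>
      x₀ - (w / ((w - 1) * (α * w + 1 - α))) * y₀ - α * w / (α * w + 1 - α))
      (0 - ((1 * ((w₀ - 1) * (α * w₀ + 1 - α)) -
        w₀ * (1 * (α * w₀ + 1 - α) + (w₀ - 1) * α)) /
        ((w₀ - 1) * (α * w₀ + 1 - α)) ^ 2) * y₀ -
        (α * (α * w₀ + 1 - α) - α * w₀ * α) / (α * w₀ + 1 - α) ^ 2) w₀ :=
    ((hasDerivAt_const w₀ x₀).sub (hM.mul_const y₀)).sub hΦ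
  refine ⟨?_, ?_⟩
  · subst hx hy
    field_simp
    ring
  · rw [hF.deriv]
    subst hy
    have hd' : w₀ * α + 1 - α ≠ 0 := by rwa [mul_comm]
    have hD' : w₀ ^ 2 * α + 1 - α ≠ 0 := by rwa [mul_comm]
    field_simp
    ring
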